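/- arXiv:2510.18592 — 4 statements merged into one kernel-verified Lean document; each statement's English description precedes it below -/
import Mathlib

section
/- Let ℓ ≥ 1, let q be a prime with q ≥ 2ℓ², and let α, α' : Fin ℓ → Bool be two distinct bitstrings. Set m = 2^(Nat.log 2 q), so that m ≤ q. Then the number of natural numbers r with r < m such that Φ_q((r : ZMod q); α) = Φ_q((r : ZMod q); α') satisfies count · ℓ < m; in particular, for r drawn uniformly at random from {0, …, m−1}, the probability that Φ_q(r; α) = Φ_q(r; α') is strictly less than 1/ℓ. -/
/-- `Φ_q(x; s) = Σ_{i < ℓ} (if s i then 1 else 0) · x^(i+1)` evaluated in `ZMod q`. -/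
def Phi (q ℓ : ℕ) (x : ZMod q) (s : Fin ℓ → Bool) : ZMod q :=
  ∑ i : Fin ℓ, (if s i then 1 else 0) * x ^ ((i : ℕ) + 1)

/-- When `r` is drawn uniformly from the dyadic range `{0, …, 2^⌊log₂ q⌋ − 1}` with `q ≥ 2ℓ²`
prime and `α ≠ α'`, the number of values `r` with `Φ_q(r; α) = Φ_q(r; α')` satisfies
`count · ℓ < m`; in particular the probability of this event is strictly less than `1/ℓ`. -/
theorem stmt_1 (ℓ q : ℕ) (hℓ : 1 ≤ ℓ) [Fact (Nat.Prime q)] (hq : 2 * ℓ ^ 2 ≤ q)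
    (α α' : Fin ℓ → Bool) (hαα' : α ≠ α') :
    ∀ m : ℕ, m = 2 ^ (Nat.log 2 q) →
      m ≤ q ∧
      ((Finset.range m).filter
          fun r : ℕ => Phi q ℓ (r : ZMod q) α = Phi q ℓ (r : ZMod q) α').card * ℓ < m ∧
      ((((Finset.range m).filter
          fun r : ℕ => Phi q ℓ (r : ZMod q) α = Phi q ℓ (r : ZMod q) α').card : ℝ) / m
        < 1 / ℓ) := by
  intro m hm
  have hqprime := (Fact.out : Nat.Prime q)
  have hq0 : q ≠ 0 := hqprime.pos.ne'
  have hmq : m ≤ q := hm ▸ Nat.pow_log_le_self 2 hq0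
  have hqm : q < 2 * m := by
    have := Nat.lt_pow_succ_log_self (by norm_num : 1 < 2) q
    rw [hm]; omega
  have hm0 : 0 < m := by rw [hm]; exact Nat.pow_pos (by norm_num)
  set P : Polynomial (ZMod q) :=
    ∑ i : Fin ℓ, Polynomial.C ((if α i then 1 else 0) - (if α' i then 1 else 0))
      * Polynomial.X ^ ((i : ℕ) + 1) with hP
  have heval : ∀ x : ZMod q, P.eval x = Phi q ℓ x α - Phi q ℓ x α' := by
    intro x
    simp [hP, Phi, Polynomial.eval_finset_sum, sub_mul, Finset.sum_sub_distrib,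
      apply_ite (Polynomial.eval x)]
  have hdeg : P.natDegree ≤ ℓ := by
    apply Polynomial.natDegree_sum_le_of_forall_le
    intro i _
    refine le_trans (Polynomial.natDegree_C_mul_le _ _) (le_trans ?_ i.2)
    simp
  have hPne : P ≠ 0 := by
    obtain ⟨i, hi⟩ := Function.ne_iff.1 hαα'
    intro h0
    have hc : P.coeff ((i : ℕ) + 1) = 0 := by rw [h0]; simp
    rw [hP, Polynomial.finset_sum_coeff] at hc
    simp only [Polynomial.coeff_C_mul, Polynomial.coeff_X_pow] at hc
    rw [Finset.sum_eq_single i] at hc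
    · simp only [if_pos rfl, if_true, mul_one] at hc
      cases hb : α i <;> cases hb' : α' i <;>
        rw [hb, hb'] at hc hi <;> simp at hc hi
    · intro j _ hj
      have hne : (i : ℕ) + 1 ≠ (j : ℕ) + 1 := fun h => hj (Fin.ext (by omega)).symm
      simp [hne, show (i : ℕ) ≠ j from fun h => hj (Fin.ext h).symm]
    · simp
  set S := (Finset.range m).filter
      fun r : ℕ => Phi q ℓ (r : ZMod q) α = Phi q ℓ (r : ZMod q) α' with hS
  have hcard : S.card ≤ ℓ := by
    have hinj : Set.InjOn (fun r : ℕ => (r : ZMod q)) S := by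
      intro a ha b hb hab
      simp only [hS, Finset.mem_coe, Finset.mem_filter, Finset.mem_range] at ha hb
      have h1 := ZMod.val_cast_of_lt (lt_of_lt_of_le ha.1 hmq)
      have h2 := ZMod.val_cast_of_lt (lt_of_lt_of_le hb.1 hmq)
      have hab' : ((a : ZMod q)) = (b : ZMod q) := hab
      have h3 : ZMod.val ((a : ZMod q)) = ZMod.val ((b : ZMod q)) := by rw [hab']
      omega
    have hmaps : ∀ r ∈ S, ((r : ZMod q)) ∈ P.roots.toFinset := by
      intro r hr
      simp only [hS, Finset.mem_filter] at hr
      rw [Multiset.mem_toFinset, Polynomial.mem_roots hPne, Polynomial.IsRoot, heval,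
        hr.2, sub_self]
    calc S.card ≤ P.roots.toFinset.card := Finset.card_le_card_of_injOn _ hmaps hinj
      _ ≤ Multiset.card P.roots := P.roots.toFinset_card_le
      _ ≤ P.natDegree := P.card_roots'
      _ ≤ ℓ := hdeg
  have hkey : S.card * ℓ < m := by
    calc S.card * ℓ ≤ ℓ * ℓ := Nat.mul_le_mul_right _ hcard
      _ = ℓ ^ 2 := (sq ℓ).symm
      _ < m := by omega
  refine ⟨hmq, hkey, ?_⟩
  rw [div_lt_div_iff₀ (by positivity) (by exact_mod_cast hℓ)]
  calc (S.card : ℝ) * ℓ = ((S.card * ℓ : ℕ) : ℝ) := by push_cast; ring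
    _ < m := by exact_mod_cast hkey
    _ = 1 * m := (one_mul _).symm
end

section
/- Let n and d be natural numbers with d ≥ 1 such that iterLog d n ≤ 16 and iterLog j n > 16 for every j < d. Then for every j with 1 ≤ j < d, iterLog j n ≥ 16 · 2^(d − 1 − j). -/
/-- The iterated base-2 logarithm: `iterLog 0 n = n`, `iterLog (d+1) n = log₂ (iterLog d n)`. -/
def iterLog : ℕ → ℕ → ℕ
  | 0, n => n
  | d + 1, n => Nat.log 2 (iterLog d n)

/-- If `d ≥ 1` is the first level at which the iterated logarithm drops to at most `16`,
then for every `1 ≤ j < d` we have `iterLog j n ≥ 16 · 2^(d − 1 − j)`. -/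
theorem stmt_11 (n d : ℕ) (hd : 1 ≤ d) (h1 : iterLog d n ≤ 16)
    (h2 : ∀ j < d, 16 < iterLog j n) :
    ∀ j, 1 ≤ j → j < d → 16 * 2 ^ (d - 1 - j) ≤ iterLog j n := by
  have key : ∀ k j, j + k + 1 = d → 16 * 2 ^ k ≤ iterLog j n := by
    intro k
    induction k with
    | zero =>
      intro j hj
      simpa using (h2 j (by omega)).le
    | succ k ih =>
      intro j hj
      have h := ih (j + 1) (by omega)
      have hpos : iterLog j n ≠ 0 := by
        have := h2 j (by omega); omega
      have hpow : 2 ^ Nat.log 2 (iterLog j n) ≤ iterLog j n :=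
        Nat.pow_log_le_self 2 hpos
      have h16 : iterLog (j + 1) n = Nat.log 2 (iterLog j n) := rfl
      calc 16 * 2 ^ (k + 1) = 2 ^ (k + 5) := by ring
        _ ≤ 2 ^ (16 * 2 ^ k) := by
            apply Nat.pow_le_pow_right (by norm_num)
            have h2k : k + 1 ≤ 2 ^ k := Nat.lt_two_pow_self
            nlinarith [Nat.one_le_two_pow (n := k)]
        _ ≤ 2 ^ Nat.log 2 (iterLog j n) :=
            Nat.pow_le_pow_right (by norm_num) (h16 ▸ h)
        _ ≤ iterLog j n := hpow
  intro j h1j hjd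
  have := key (d - 1 - j) j (by omega)
  exact this
end

section
/- Let n and d be natural numbers with d ≥ 1 such that iterLog d n ≤ 16 and iterLog j n > 16 for every j < d. Then Σ_{j=1}^{d−1} (1 : ℝ) / (iterLog j n) < 1/8. -/
/-- Union bound for the soundness of the ⟂iterated protocol: if `d ≥ 1` is the first level at
which the iterated logarithm drops to at most `16`, then `Σ_{j=1}^{d−1} 1/(iterLog j n) < 1/8`. -/
theorem stmt_12 (n d : ℕ) (hd : 1 ≤ d) (h1 : iterLog d n ≤ 16)
    (h2 : ∀ j < d, 16 < iterLog j n) :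
    ∑ j ∈ Finset.Ico 1 d, (1 : ℝ) / (iterLog j n : ℝ) < 1 / 8 := by
  have key : ∀ k : ℕ, ∀ j : ℕ, j < d → d - j = k + 1 → 17 * 2 ^ k ≤ iterLog j n := by
    intro k
    induction k with
    | zero =>
      intro j hj _
      have := h2 j hj
      simp only [pow_zero, mul_one]; omega
    | succ k ih =>
      intro j hj hjd
      have hj1 : j + 1 < d := by omega
      have ih' : 17 * 2 ^ k ≤ iterLog (j + 1) n := ih (j + 1) hj1 (by omega)
      have hpow : 2 ^ (iterLog (j + 1) n) ≤ iterLog j n := by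
        have hne : iterLog j n ≠ 0 := by have := h2 j hj; omega
        have := Nat.pow_log_le_self 2 hne
        simpa [iterLog] using this
      have h2k : 2 ^ (17 * 2 ^ k) ≤ 2 ^ (iterLog (j + 1) n) :=
        Nat.pow_le_pow_right (by norm_num) ih'
      have hexp : k + 6 ≤ 17 * 2 ^ k := by
        have h : k < 2 ^ k := Nat.lt_two_pow_self
        nlinarith [Nat.one_le_two_pow (n := k)]
      have hfin : 17 * 2 ^ (k + 1) ≤ 2 ^ (17 * 2 ^ k) := by
        calc 17 * 2 ^ (k + 1) ≤ 2 ^ 6 * 2 ^ k := by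
              have : (2:ℕ) ^ (k+1) = 2 * 2 ^ k := by ring
              rw [this]; nlinarith [Nat.one_le_two_pow (n := k)]
          _ = 2 ^ (k + 6) := by ring
          _ ≤ 2 ^ (17 * 2 ^ k) := Nat.pow_le_pow_right (by norm_num) hexp
      omega
  have hbound : ∀ j ∈ Finset.Ico 1 d,
      (1 : ℝ) / (iterLog j n : ℝ) ≤ (1/17) * (1/2) ^ (d - 1 - j) := by
    intro j hj
    simp only [Finset.mem_Ico] at hj
    have hk : 17 * 2 ^ (d - 1 - j) ≤ iterLog j n := key (d - 1 - j) j hj.2 (by omega)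
    have hkR : (17 : ℝ) * 2 ^ (d - 1 - j) ≤ (iterLog j n : ℝ) := by exact_mod_cast hk
    have h1 : (1 : ℝ) / (iterLog j n : ℝ) ≤ 1 / ((17:ℝ) * 2 ^ (d - 1 - j)) :=
      one_div_le_one_div_of_le (by positivity) hkR
    have h2' : (1 / ((17:ℝ) * 2 ^ (d - 1 - j))) = (1/17) * (1/2) ^ (d - 1 - j) := by
      rw [one_div_pow]
      field_simp
    linarith
  have hsum : ∑ j ∈ Finset.Ico 1 d, (1 : ℝ) / (iterLog j n : ℝ)
      ≤ ∑ j ∈ Finset.Ico 1 d, (1/17) * (1/2 : ℝ) ^ (d - 1 - j) :=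
    Finset.sum_le_sum hbound
  have hre : ∑ j ∈ Finset.Ico 1 d, (1/17) * (1/2 : ℝ) ^ (d - 1 - j)
      = ∑ i ∈ Finset.range (d - 1), (1/17) * (1/2 : ℝ) ^ i := by
    rw [Finset.sum_Ico_eq_sum_range]
    rw [← Finset.sum_range_reflect]
    apply Finset.sum_congr rfl
    intro i hi
    simp only [Finset.mem_range] at hi
    have : d - 1 - (1 + (d - 1 - 1 - i)) = i := by omega
    rw [this]
  have hgeo : ∑ i ∈ Finset.range (d - 1), (1/2 : ℝ) ^ i ≤ 2 :=
    sum_geometric_two_le _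
  have : ∑ i ∈ Finset.range (d - 1), (1/17) * (1/2 : ℝ) ^ i ≤ 2/17 := by
    rw [← Finset.mul_sum]
    linarith
  calc ∑ j ∈ Finset.Ico 1 d, (1 : ℝ) / (iterLog j n : ℝ)
      ≤ 2/17 := by rw [hre] at hsum; linarith
    _ < 1/8 := by norm_num
end

section
/- For every natural constant c ≥ 1 there exists N such that for all n ≥ N, (c · iterLog 2 n)^(2 · logStar n) < iterLog 1 n; that is, (c · log₂ log₂ n)^(2 · log* n) < log₂ n for all sufficiently large n. -/
/-- `log* n`: the least `d` such that `iterLog d n ≤ 1`. -/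
noncomputable def logStar (n : ℕ) : ℕ := sInf {d | iterLog d n ≤ 1}

lemma iterLog_succ_eq (d n : ℕ) : iterLog (d + 1) n = iterLog d (Nat.log 2 n) := by
  induction d with
  | zero => rfl
  | succ d ih => show Nat.log 2 (iterLog (d+1) n) = _; rw [ih]; rfl

lemma exists_iterLog_le_one (n : ℕ) : ∃ d, iterLog d n ≤ 1 := by
  induction n using Nat.strong_induction_on with
  | _ n ih =>
    rcases le_or_gt n 1 with h | h
    · exact ⟨0, h⟩
    · obtain ⟨d, hd⟩ := ih (Nat.log 2 n) (Nat.log_lt_self 2 (by omega))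
      exact ⟨d + 1, by rw [iterLog_succ_eq]; exact hd⟩

lemma logStar_set_nonempty (n : ℕ) : {d | iterLog d n ≤ 1}.Nonempty :=
  exists_iterLog_le_one n

lemma logStar_le_succ (n : ℕ) : logStar n ≤ logStar (Nat.log 2 n) + 1 := by
  have hmem := Nat.sInf_mem (logStar_set_nonempty (Nat.log 2 n))
  apply Nat.sInf_le
  show iterLog (logStar (Nat.log 2 n) + 1) n ≤ 1
  rw [iterLog_succ_eq]
  exact hmem

lemma logStar_of_le_one {n : ℕ} (h : n ≤ 1) : logStar n = 0 :=
  Nat.sInf_eq_zero.2 (Or.inl h)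

lemma logStar_le_log (n : ℕ) (hn : 2 ≤ n) : logStar n ≤ Nat.log 2 n := by
  induction n using Nat.strong_induction_on with
  | _ n ih =>
    rcases lt_or_ge n 4 with h4 | h4
    · interval_cases n
      · have : Nat.log 2 2 = 1 := Nat.log_eq_of_pow_le_of_lt_pow (by norm_num) (by norm_num)
        calc logStar 2 ≤ logStar (Nat.log 2 2) + 1 := logStar_le_succ 2
          _ = 1 := by rw [this, logStar_of_le_one (by norm_num)]
          _ ≤ Nat.log 2 2 := by rw [this]
      · have : Nat.log 2 3 = 1 := Nat.log_eq_of_pow_le_of_lt_pow (by norm_num) (by norm_num)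
        calc logStar 3 ≤ logStar (Nat.log 2 3) + 1 := logStar_le_succ 3
          _ = 1 := by rw [this, logStar_of_le_one (by norm_num)]
          _ ≤ Nat.log 2 3 := by rw [this]
    · have hl2 : 2 ≤ Nat.log 2 n := by
        have := Nat.log_mono_right (b := 2) h4
        simpa [Nat.log_eq_of_pow_le_of_lt_pow (by norm_num : (2:ℕ)^2 ≤ 4) (by norm_num)]
          using this
      have hlt : Nat.log 2 n < n := Nat.log_lt_self 2 (by omega)
      calc logStar n ≤ logStar (Nat.log 2 n) + 1 := logStar_le_succ n
        _ ≤ Nat.log 2 (Nat.log 2 n) + 1 := by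
            exact Nat.add_le_add_right (ih _ hlt hl2) 1
        _ ≤ Nat.log 2 n := by
            have := Nat.log_lt_self 2 (x := Nat.log 2 n) (by omega)
            omega

lemma cube_lt_two_pow {m : ℕ} (hm : 10 ≤ m) : m ^ 3 < 2 ^ m := by
  induction m, hm using Nat.le_induction with
  | base => norm_num
  | succ m hm ih =>
    have h1 : (m + 1) ^ 3 ≤ 2 * m ^ 3 := by ring_nf; nlinarith
    calc (m + 1) ^ 3 ≤ 2 * m ^ 3 := h1
      _ < 2 * 2 ^ m := by omega
      _ = 2 ^ (m + 1) := by ring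

lemma poly_lt_exp (k : ℕ) {m : ℕ} (hm : max k 10 ≤ m) :
    (k + m + 2) * (2 * m + 4) < 2 ^ m := by
  have hk : k ≤ m := le_trans (le_max_left _ _) hm
  have h10 : 10 ≤ m := le_trans (le_max_right _ _) hm
  calc (k + m + 2) * (2 * m + 4) ≤ (3 * m) * (3 * m) := by nlinarith
    _ ≤ m ^ 3 := by nlinarith
    _ < 2 ^ m := cube_lt_two_pow h10

/-- For every constant `c ≥ 1` and all sufficiently large `n`,
`(c · log₂ log₂ n)^(2 · log* n) < log₂ n`. -/
theorem stmt_14 (c : ℕ) (hc : 1 ≤ c) :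
    ∃ N : ℕ, ∀ n ≥ N, (c * iterLog 2 n) ^ (2 * logStar n) < iterLog 1 n := by
  set k := Nat.log 2 c with hk
  set m₀ := max k 10 with hm₀
  refine ⟨2 ^ 2 ^ 2 ^ m₀, fun n hn => ?_⟩
  set L := Nat.log 2 n with hL
  set ℓ := Nat.log 2 L with hℓ
  set m := Nat.log 2 ℓ with hm
  have hL1 : 2 ^ 2 ^ m₀ ≤ L := by
    calc 2 ^ 2 ^ m₀ = Nat.log 2 (2 ^ 2 ^ 2 ^ m₀) := (Nat.log_pow one_lt_two _).symm
      _ ≤ L := Nat.log_mono_right hn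
  have hℓ1 : 2 ^ m₀ ≤ ℓ := by
    calc 2 ^ m₀ = Nat.log 2 (2 ^ 2 ^ m₀) := (Nat.log_pow one_lt_two _).symm
      _ ≤ ℓ := Nat.log_mono_right hL1
  have hm1 : m₀ ≤ m := by
    calc m₀ = Nat.log 2 (2 ^ m₀) := (Nat.log_pow one_lt_two _).symm
      _ ≤ m := Nat.log_mono_right hℓ1
  have hℓ2 : 2 ≤ ℓ := le_trans (by calc 2 ≤ 2 ^ 10 := by norm_num
    _ ≤ 2 ^ m₀ := Nat.pow_le_pow_right (by norm_num) (le_max_right _ _)) hℓ1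
  have hL2 : 2 ≤ L := le_trans (by
    calc 2 ≤ 2 ^ 2 ^ 10 := Nat.le_self_pow (by norm_num) _
      _ ≤ 2 ^ 2 ^ m₀ := Nat.pow_le_pow_right (by norm_num)
          (Nat.pow_le_pow_right (by norm_num) (le_max_right _ _))) hL1
  have hi1 : iterLog 1 n = L := rfl
  have hi2 : iterLog 2 n = ℓ := rfl
  rw [hi1, hi2]
  -- bound on logStar n
  have hstar : logStar n ≤ m + 2 := by
    calc logStar n ≤ logStar L + 1 := logStar_le_succ n
      _ ≤ (logStar ℓ + 1) + 1 := by
          exact Nat.add_le_add_right (logStar_le_succ L) 1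
      _ ≤ m + 2 := by
          have := logStar_le_log ℓ hℓ2
          omega
  -- bound on base
  have hbase : c * ℓ ≤ 2 ^ (k + m + 2) := by
    have h1 : c < 2 ^ (k + 1) := Nat.lt_pow_succ_log_self one_lt_two c
    have h2 : ℓ < 2 ^ (m + 1) := Nat.lt_pow_succ_log_self one_lt_two ℓ
    calc c * ℓ ≤ 2 ^ (k + 1) * 2 ^ (m + 1) :=
          Nat.mul_le_mul h1.le h2.le
      _ = 2 ^ (k + m + 2) := by rw [← pow_add]; ring_nf
  have hc1 : 1 ≤ c * ℓ := Nat.one_le_iff_ne_zero.2 (by positivity)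
  have hpoly : (k + m + 2) * (2 * (m + 2)) < ℓ := by
    have h1 : (k + m + 2) * (2 * m + 4) < 2 ^ m := poly_lt_exp k (hm₀ ▸ hm1)
    have h2 : 2 ^ m ≤ ℓ := Nat.pow_log_le_self 2 (by omega)
    calc (k + m + 2) * (2 * (m + 2)) = (k + m + 2) * (2 * m + 4) := by ring
      _ < 2 ^ m := h1
      _ ≤ ℓ := h2
  calc (c * ℓ) ^ (2 * logStar n) ≤ (c * ℓ) ^ (2 * (m + 2)) :=
        Nat.pow_le_pow_right hc1 (by omega)
    _ ≤ (2 ^ (k + m + 2)) ^ (2 * (m + 2)) := Nat.pow_le_pow_left hbase _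
    _ = 2 ^ ((k + m + 2) * (2 * (m + 2))) := by rw [← pow_mul]
    _ < 2 ^ ℓ := Nat.pow_lt_pow_right one_lt_two hpoly
    _ ≤ L := Nat.pow_log_le_self 2 (by omega)
end
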